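/- Let ω(x) = tanh(x/√2) and let f : ℝ → ℝ be continuous and bounded with ∫_ℝ f(x) ω'(x) dx = 0. Define ξ̃(x) = ω'(x) ∫_0^x (ω'(s))^{−2} ( ∫_{−∞}^s f(τ) ω'(τ) dτ ) ds. Then ∫_ℝ ξ̃(x) ω(x) (ω'(x))² dx = −(√2/6) ∫_ℝ f(x) ω'(x) ω(x) dx (in particular, all integrals involved converge absolutely). -/

import Mathlib

open Real MeasureTheory

noncomputable def ω (x : ℝ) : ℝ := Real.tanh (x / Real.sqrt 2)

noncomputable def xiTilde (f : ℝ → ℝ) (x : ℝ) : ℝ :=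
  deriv ω x *
    ∫ s in (0 : ℝ)..x, ((deriv ω s) ^ 2)⁻¹ * ∫ τ in Set.Iic s, f τ * deriv ω τ

noncomputable def Wc (x : ℝ) : ℝ := (1 - ω x ^ 2) / Real.sqrt 2

lemma s2_pos : (0:ℝ) < Real.sqrt 2 := by positivity

lemma s2_sq : Real.sqrt 2 * Real.sqrt 2 = 2 :=
  Real.mul_self_sqrt (by norm_num)

lemma hasDerivAt_tanh (y : ℝ) : HasDerivAt Real.tanh (1 - Real.tanh y ^ 2) y := by
  have h := (Real.hasDerivAt_sinh y).div (Real.hasDerivAt_cosh y) (Real.cosh_pos y).ne'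
  have he : ∀ x, Real.tanh x = Real.sinh x / Real.cosh x := Real.tanh_eq_sinh_div_cosh
  have h' : HasDerivAt Real.tanh ((Real.cosh y * Real.cosh y - Real.sinh y * Real.sinh y)
      / Real.cosh y ^ 2) y := by
    rw [show Real.tanh = Real.sinh / Real.cosh from funext he]; exact h
  refine h'.congr_deriv ?_
  · rw [he]
    have hc := (Real.cosh_pos y).ne'
    rw [div_pow, one_sub_div (pow_ne_zero 2 hc)]
    ring

lemma hasDerivAt_omega (x : ℝ) : HasDerivAt ω (Wc x) x := by
  have h := (hasDerivAt_tanh (x / Real.sqrt 2)).comp x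
    ((hasDerivAt_id x).div_const (Real.sqrt 2))
  refine h.congr_deriv ?_
  simp only [Wc, ω, id]
  ring

lemma deriv_omega : deriv ω = Wc := funext fun x => (hasDerivAt_omega x).deriv

lemma one_sub_tanh (y : ℝ) : 1 - Real.tanh y = Real.exp (-y) / Real.cosh y := by
  rw [Real.tanh_eq_sinh_div_cosh, ← Real.cosh_sub_sinh y]
  field_simp

lemma one_add_tanh (y : ℝ) : 1 + Real.tanh y = Real.exp y / Real.cosh y := by
  rw [Real.tanh_eq_sinh_div_cosh, ← Real.cosh_add_sinh y]
  field_simp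

lemma one_sub_omega_pos (x : ℝ) : 0 < 1 - ω x := by
  rw [ω, one_sub_tanh]; positivity

lemma one_add_omega_pos (x : ℝ) : 0 < 1 + ω x := by
  rw [ω, one_add_tanh]; positivity

lemma omega_lt_one (x : ℝ) : ω x < 1 := by linarith [one_sub_omega_pos x]
lemma neg_one_lt_omega (x : ℝ) : -1 < ω x := by linarith [one_add_omega_pos x]

lemma Wc_pos (x : ℝ) : 0 < Wc x := by
  have h1 := one_sub_omega_pos x
  have h2 := one_add_omega_pos x
  have : 0 < (1 - ω x) * (1 + ω x) := mul_pos h1 h2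
  rw [Wc]
  have : 0 < 1 - ω x ^ 2 := by nlinarith
  positivity

lemma Wc_le (x : ℝ) : Wc x ≤ (Real.sqrt 2)⁻¹ := by
  rw [Wc, div_eq_mul_inv]
  have h2 : 0 ≤ ω x ^ 2 := sq_nonneg _
  have : 1 - ω x ^ 2 ≤ 1 := by linarith
  nlinarith [inv_pos.mpr s2_pos]

lemma half_exp_le_cosh (y : ℝ) : Real.exp y / 2 ≤ Real.cosh y := by
  rw [Real.cosh_eq]
  have := (Real.exp_pos (-y)).le
  linarith

lemma one_sub_omega_le (x : ℝ) : 1 - ω x ≤ 2 * Real.exp (-(Real.sqrt 2 * x)) := by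
  rw [ω, one_sub_tanh]
  have hc := Real.cosh_pos (x / Real.sqrt 2)
  have h1 : Real.exp (x / Real.sqrt 2) / 2 ≤ Real.cosh (x / Real.sqrt 2) := half_exp_le_cosh _
  have hx2 : x / Real.sqrt 2 + x / Real.sqrt 2 = Real.sqrt 2 * x := by
    rw [← add_div, div_eq_iff s2_pos.ne']; linear_combination (-x) * s2_sq
  have hx : -(x / Real.sqrt 2) + -(x / Real.sqrt 2) = -(Real.sqrt 2 * x) := by
    rw [← hx2]; ring
  calc Real.exp (-(x / Real.sqrt 2)) / Real.cosh (x / Real.sqrt 2)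
      ≤ Real.exp (-(x / Real.sqrt 2)) / (Real.exp (x / Real.sqrt 2) / 2) := by
        apply div_le_div_of_nonneg_left (Real.exp_pos _).le (by positivity) h1
    _ = 2 * Real.exp (-(Real.sqrt 2 * x)) := by
        rw [← hx, Real.exp_add]
        rw [Real.exp_neg (x / Real.sqrt 2)]
        field_simp
        try ring

lemma one_add_omega_le (x : ℝ) : 1 + ω x ≤ 2 * Real.exp (Real.sqrt 2 * x) := by
  rw [ω, one_add_tanh]
  have hc := Real.cosh_pos (x / Real.sqrt 2)
  have h1 : Real.exp (-(x / Real.sqrt 2)) / 2 ≤ Real.cosh (x / Real.sqrt 2) := by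
    have := half_exp_le_cosh (-(x / Real.sqrt 2))
    rwa [Real.cosh_neg] at this
  have hx : x / Real.sqrt 2 + x / Real.sqrt 2 = Real.sqrt 2 * x := by
    rw [← add_div, div_eq_iff s2_pos.ne']; linear_combination (-x) * s2_sq
  calc Real.exp (x / Real.sqrt 2) / Real.cosh (x / Real.sqrt 2)
      ≤ Real.exp (x / Real.sqrt 2) / (Real.exp (-(x / Real.sqrt 2)) / 2) := by
        apply div_le_div_of_nonneg_left (Real.exp_pos _).le (by positivity) h1
    _ = 2 * Real.exp (Real.sqrt 2 * x) := by
        rw [← hx, Real.exp_add, Real.exp_neg (x / Real.sqrt 2)]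
        field_simp
        try ring

lemma omega_cont : Continuous ω :=
  continuous_iff_continuousAt.mpr fun x => (hasDerivAt_omega x).continuousAt

lemma Wc_cont : Continuous Wc :=
  (continuous_const.sub (omega_cont.pow 2)).div_const _

lemma omega_nonneg {x : ℝ} (hx : 0 ≤ x) : 0 ≤ ω x := by
  rw [ω, Real.tanh_eq_sinh_div_cosh]
  exact div_nonneg (Real.sinh_nonneg_iff.mpr (by positivity)) (Real.cosh_pos _).le

lemma omega_nonpos {x : ℝ} (hx : x ≤ 0) : ω x ≤ 0 := by
  rw [ω, Real.tanh_eq_sinh_div_cosh]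
  apply div_nonpos_of_nonpos_of_nonneg _ (Real.cosh_pos _).le
  exact Real.sinh_nonpos_iff.mpr (div_nonpos_of_nonpos_of_nonneg hx s2_pos.le)

lemma tendsto_omega_atTop : Filter.Tendsto ω Filter.atTop (nhds 1) := by
  have h0 : Filter.Tendsto (fun x : ℝ => 2 * Real.exp (-(Real.sqrt 2 * x)))
      Filter.atTop (nhds 0) := by
    have : Filter.Tendsto (fun x : ℝ => -(Real.sqrt 2 * x)) Filter.atTop Filter.atBot := by
      apply Filter.tendsto_neg_atBot_iff.mpr
      exact Filter.Tendsto.const_mul_atTop s2_pos Filter.tendsto_id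
    have := Real.tendsto_exp_atBot.comp this
    simpa using this.const_mul 2
  have hsq : Filter.Tendsto (fun x => 1 - ω x) Filter.atTop (nhds 0) :=
    squeeze_zero (fun x => (one_sub_omega_pos x).le) (fun x => one_sub_omega_le x) h0
  have := (tendsto_const_nhds (x := (1:ℝ)) (f := (Filter.atTop : Filter ℝ))).sub hsq
  simpa using this

lemma tendsto_omega_atBot : Filter.Tendsto ω Filter.atBot (nhds (-1)) := by
  have h0 : Filter.Tendsto (fun x : ℝ => 2 * Real.exp (Real.sqrt 2 * x))
      Filter.atBot (nhds 0) := by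
    have : Filter.Tendsto (fun x : ℝ => Real.sqrt 2 * x) Filter.atBot Filter.atBot :=
      Filter.Tendsto.const_mul_atBot s2_pos Filter.tendsto_id
    have := Real.tendsto_exp_atBot.comp this
    simpa using this.const_mul 2
  have hsq : Filter.Tendsto (fun x => 1 + ω x) Filter.atBot (nhds 0) :=
    squeeze_zero (fun x => (one_add_omega_pos x).le) (fun x => one_add_omega_le x) h0
  have := hsq.sub tendsto_const_nhds (g := fun _ : ℝ => (1:ℝ))
  simpa using this

lemma tendsto_Wc_atTop : Filter.Tendsto Wc Filter.atTop (nhds 0) := by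
  have := ((tendsto_const_nhds (x := (1:ℝ)) (f := (Filter.atTop : Filter ℝ))).sub
    (tendsto_omega_atTop.pow 2)).div_const (Real.sqrt 2)
  simp at this; exact this

lemma tendsto_Wc_atBot : Filter.Tendsto Wc Filter.atBot (nhds 0) := by
  have := ((tendsto_const_nhds (x := (1:ℝ)) (f := (Filter.atBot : Filter ℝ))).sub
    (tendsto_omega_atBot.pow 2)).div_const (Real.sqrt 2)
  simp at this; exact this

lemma Wc_eq (x : ℝ) : Wc x = (1 - ω x) * (1 + ω x) / Real.sqrt 2 := by
  rw [Wc]; ring_nf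

lemma Wc_le_exp_neg (x : ℝ) : Wc x ≤ 2 * Real.sqrt 2 * Real.exp (-(Real.sqrt 2 * x)) := by
  rw [Wc_eq]
  have h1 := one_sub_omega_le x
  have h2 := one_add_omega_pos x
  have h3 := one_sub_omega_pos x
  have h4 : 1 + ω x ≤ 2 := by have := omega_lt_one x; linarith
  rw [div_le_iff₀ s2_pos]
  nlinarith [Real.exp_pos (-(Real.sqrt 2 * x)), s2_sq]

lemma Wc_le_exp_pos (x : ℝ) : Wc x ≤ 2 * Real.sqrt 2 * Real.exp (Real.sqrt 2 * x) := by
  rw [Wc_eq]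
  have h1 := one_add_omega_le x
  have h2 := one_add_omega_pos x
  have h3 := one_sub_omega_pos x
  have h4 : 1 - ω x ≤ 2 := by have := neg_one_lt_omega x; linarith
  rw [div_le_iff₀ s2_pos]
  nlinarith [Real.exp_pos (Real.sqrt 2 * x), s2_sq]

lemma Wc_integrable : Integrable Wc := by
  rw [← integrableOn_univ, ← Set.Iic_union_Ioi (a := (0:ℝ))]
  apply IntegrableOn.union
  · have hg : IntegrableOn (fun x : ℝ => 2 * Real.sqrt 2 * Real.exp x) (Set.Iic 0) :=
      (integrableOn_exp_Iic 0).const_mul _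
    apply hg.mono' (Wc_cont.aestronglyMeasurable.restrict)
    rw [ae_restrict_iff' measurableSet_Iic]
    filter_upwards with x hx
    have h1 : Real.exp (Real.sqrt 2 * x) ≤ Real.exp x := by
      apply Real.exp_le_exp.mpr
      nlinarith [s2_sq, s2_pos, Set.mem_Iic.mp hx, Real.sq_sqrt (by norm_num : (0:ℝ) ≤ 2),
        Real.sqrt_le_sqrt (by norm_num : (2:ℝ) ≤ 4)]
    have h2 := Wc_le_exp_pos x
    have h3 := (Wc_pos x).le
    rw [Real.norm_eq_abs, abs_of_nonneg h3]
    nlinarith [s2_pos]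
  · have hg : IntegrableOn (fun x : ℝ => 2 * Real.sqrt 2 * Real.exp (-(Real.sqrt 2) * x))
        (Set.Ioi 0) := (exp_neg_integrableOn_Ioi 0 s2_pos).const_mul _
    apply hg.mono' (Wc_cont.aestronglyMeasurable.restrict)
    filter_upwards with x
    have h2 := Wc_le_exp_neg x
    have h3 := (Wc_pos x).le
    rw [Real.norm_eq_abs, abs_of_nonneg h3, neg_mul]
    exact h2

lemma hasDerivAt_Wc (x : ℝ) : HasDerivAt Wc (-(Real.sqrt 2) * ω x * Wc x) x := by
  have h : HasDerivAt Wc (-(2 * ω x * Wc x) / Real.sqrt 2) x := by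
    have h0 := (((hasDerivAt_omega x).pow 2).const_sub 1).div_const (Real.sqrt 2)
    norm_num at h0
    exact h0
  convert h using 1
  field_simp
  linear_combination (-(ω x * Wc x)) * s2_sq

lemma integral_Wc_Iic (s : ℝ) : ∫ x in Set.Iic s, Wc x = ω s + 1 := by
  have h := integral_Iic_of_hasDerivAt_of_tendsto' (f := ω) (f' := Wc) (a := s)
    (fun x _ => hasDerivAt_omega x) Wc_integrable.integrableOn tendsto_omega_atBot
  rw [h]; ring

lemma integral_Wc_Ioi (s : ℝ) : ∫ x in Set.Ioi s, Wc x = 1 - ω s := by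
  exact integral_Ioi_of_hasDerivAt_of_tendsto' (f := ω) (f' := Wc) (a := s)
    (fun x _ => hasDerivAt_omega x) Wc_integrable.integrableOn tendsto_omega_atTop

lemma integrable_of_le_Wc {u : ℝ → ℝ} {C : ℝ} (hu : Continuous u)
    (hb : ∀ x, |u x| ≤ C * Wc x) : Integrable u := by
  apply (Wc_integrable.const_mul C).mono' hu.aestronglyMeasurable
  filter_upwards with x
  rw [Real.norm_eq_abs]
  exact hb x

section Ffacts

variable {f : ℝ → ℝ} {M : ℝ}

lemma g_int (hf : Continuous f) (hM : ∀ x, |f x| ≤ M) :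
    Integrable (fun x => f x * Wc x) := by
  apply integrable_of_le_Wc (hf.mul Wc_cont)
  intro x
  simp only [Pi.mul_apply]
  rw [abs_mul, abs_of_nonneg (Wc_pos x).le]
  exact mul_le_mul_of_nonneg_right (hM x) (Wc_pos x).le

lemma gom_int (hf : Continuous f) (hM : ∀ x, |f x| ≤ M) :
    Integrable (fun x => f x * Wc x * ω x) := by
  apply integrable_of_le_Wc ((hf.mul Wc_cont).mul omega_cont)
  intro x
  simp only [Pi.mul_apply]
  rw [abs_mul, abs_mul, abs_of_nonneg (Wc_pos x).le]
  have h1 : |ω x| ≤ 1 := by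
    rw [abs_le]; exact ⟨(neg_one_lt_omega x).le, (omega_lt_one x).le⟩
  calc |f x| * Wc x * |ω x| ≤ |f x| * Wc x * 1 := by
        exact mul_le_mul_of_nonneg_left h1 (mul_nonneg (abs_nonneg _) (Wc_pos x).le)
    _ = |f x| * Wc x := by ring
    _ ≤ M * Wc x := mul_le_mul_of_nonneg_right (hM x) (Wc_pos x).le

noncomputable def Fint (f : ℝ → ℝ) (s : ℝ) : ℝ := ∫ τ in Set.Iic s, f τ * Wc τ

lemma Fint_le_left (hf : Continuous f) (hM : ∀ x, |f x| ≤ M) (s : ℝ) :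
    |Fint f s| ≤ M * (1 + ω s) := by
  have hg := g_int hf hM
  have h1 : |Fint f s| ≤ ∫ τ in Set.Iic s, |f τ * Wc τ| := by
    rw [Fint]
    simp only [← Real.norm_eq_abs]
    exact norm_integral_le_integral_norm _
  have h2 : ∫ τ in Set.Iic s, |f τ * Wc τ| ≤ ∫ τ in Set.Iic s, M * Wc τ := by
    apply setIntegral_mono_on hg.abs.integrableOn
      ((Wc_integrable.const_mul M).integrableOn) measurableSet_Iic
    intro x _
    rw [abs_mul, abs_of_nonneg (Wc_pos x).le]
    exact mul_le_mul_of_nonneg_right (hM x) (Wc_pos x).le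
  have h3 : ∫ τ in Set.Iic s, M * Wc τ = M * (1 + ω s) := by
    rw [MeasureTheory.integral_const_mul, integral_Wc_Iic]; ring
  linarith

lemma Fint_eq_neg_right (hf : Continuous f) (hM : ∀ x, |f x| ≤ M)
    (h0 : (∫ x : ℝ, f x * Wc x) = 0) (s : ℝ) :
    Fint f s = -∫ τ in Set.Ioi s, f τ * Wc τ := by
  have hg := g_int hf hM
  have := integral_add_compl (measurableSet_Iic (a := s)) hg
  rw [Set.compl_Iic, h0] at this
  rw [Fint]
  linarith [this]

lemma Fint_le_right (hf : Continuous f) (hM : ∀ x, |f x| ≤ M)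
    (h0 : (∫ x : ℝ, f x * Wc x) = 0) (s : ℝ) :
    |Fint f s| ≤ M * (1 - ω s) := by
  have hg := g_int hf hM
  rw [Fint_eq_neg_right hf hM h0 s, abs_neg]
  have h1 : |∫ τ in Set.Ioi s, f τ * Wc τ| ≤ ∫ τ in Set.Ioi s, |f τ * Wc τ| := by
    simp only [← Real.norm_eq_abs]
    exact norm_integral_le_integral_norm _
  have h2 : ∫ τ in Set.Ioi s, |f τ * Wc τ| ≤ ∫ τ in Set.Ioi s, M * Wc τ := by
    apply setIntegral_mono_on hg.abs.integrableOn
      ((Wc_integrable.const_mul M).integrableOn) measurableSet_Ioi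
    intro x _
    rw [abs_mul, abs_of_nonneg (Wc_pos x).le]
    exact mul_le_mul_of_nonneg_right (hM x) (Wc_pos x).le
  have h3 : ∫ τ in Set.Ioi s, M * Wc τ = M * (1 - ω s) := by
    rw [MeasureTheory.integral_const_mul, integral_Wc_Ioi]
  linarith

lemma hasDerivAt_Fint (hf : Continuous f) (hM : ∀ x, |f x| ≤ M) (s : ℝ) :
    HasDerivAt (Fint f) (f s * Wc s) s := by
  have hg := g_int hf hM
  have hgc : Continuous (fun x => f x * Wc x) := hf.mul Wc_cont
  have key : Fint f = fun s => Fint f 0 + ∫ t in (0:ℝ)..s, f t * Wc t := by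
    funext u
    have := intervalIntegral.integral_Iic_sub_Iic hg.integrableOn hg.integrableOn
      (a := (0:ℝ)) (b := u)
    rw [Fint, Fint]
    linarith [this]
  rw [key]
  exact (intervalIntegral.integral_hasDerivAt_right (hgc.intervalIntegrable _ _)
    (hgc.stronglyMeasurableAtFilter _ _) hgc.continuousAt).const_add _

lemma Fint_cont (hf : Continuous f) (hM : ∀ x, |f x| ≤ M) : Continuous (Fint f) :=
  continuous_iff_continuousAt.mpr fun s => (hasDerivAt_Fint hf hM s).continuousAt

lemma tendsto_Fint_atBot (hf : Continuous f) (hM : ∀ x, |f x| ≤ M) :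
    Filter.Tendsto (Fint f) Filter.atBot (nhds 0) := by
  apply squeeze_zero_norm (fun s => Fint_le_left hf hM s)
  have := (tendsto_const_nhds (x := (1:ℝ)) (f := (Filter.atBot : Filter ℝ))).add
    tendsto_omega_atBot
  have h2 := this.const_mul M
  simpa using h2

lemma tendsto_Fint_atTop (hf : Continuous f) (hM : ∀ x, |f x| ≤ M)
    (h0 : (∫ x : ℝ, f x * Wc x) = 0) :
    Filter.Tendsto (Fint f) Filter.atTop (nhds 0) := by
  apply squeeze_zero_norm (fun s => Fint_le_right hf hM h0 s)
  have := (tendsto_const_nhds (x := (1:ℝ)) (f := (Filter.atTop : Filter ℝ))).sub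
    tendsto_omega_atTop
  have h2 := this.const_mul M
  simpa using h2

end Ffacts

lemma omega_zero : ω 0 = 0 := by
  simp [ω, Real.tanh_zero]

lemma sqrt2_wc (x : ℝ) : Real.sqrt 2 * Wc x = (1 - ω x) * (1 + ω x) := by
  rw [Wc_eq, mul_div_assoc']
  rw [mul_comm (Real.sqrt 2), mul_div_assoc, div_self s2_pos.ne', mul_one]

section Hfacts

variable {f : ℝ → ℝ} {M : ℝ}

noncomputable def hfun (f : ℝ → ℝ) (x : ℝ) : ℝ :=
  ∫ s in (0:ℝ)..x, (Wc s ^ 2)⁻¹ * Fint f s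

lemma q_cont (hf : Continuous f) (hM : ∀ x, |f x| ≤ M) :
    Continuous (fun s => (Wc s ^ 2)⁻¹ * Fint f s) := by
  apply Continuous.mul _ (Fint_cont hf hM)
  exact (Wc_cont.pow 2).inv₀ (fun x => pow_ne_zero 2 (Wc_pos x).ne')

lemma hasDerivAt_hfun (hf : Continuous f) (hM : ∀ x, |f x| ≤ M) (x : ℝ) :
    HasDerivAt (hfun f) ((Wc x ^ 2)⁻¹ * Fint f x) x := by
  have hqc := q_cont hf hM
  exact intervalIntegral.integral_hasDerivAt_right (hqc.intervalIntegrable _ _)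
    (hqc.stronglyMeasurableAtFilter _ _) hqc.continuousAt

lemma hfun_cont (hf : Continuous f) (hM : ∀ x, |f x| ≤ M) : Continuous (hfun f) :=
  continuous_iff_continuousAt.mpr fun x => (hasDerivAt_hfun hf hM x).continuousAt

lemma M_nonneg (hM : ∀ x : ℝ, |f x| ≤ M) : 0 ≤ M :=
  le_trans (abs_nonneg (f 0)) (hM 0)

lemma hfun_bound_pos (hf : Continuous f) (hM : ∀ x, |f x| ≤ M)
    (h0 : (∫ x : ℝ, f x * Wc x) = 0) {x : ℝ} (hx : 0 ≤ x) :
    |hfun f x| ≤ 2 * Real.sqrt 2 * M / (1 - ω x) := by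
  have hM0 := M_nonneg hM
  have hqc := q_cont hf hM
  -- the majorant ψ s = 2√2 M (1 - ω s)⁻¹
  set ψ : ℝ → ℝ := fun s => 2 * Real.sqrt 2 * M * (1 - ω s)⁻¹ with hψ
  have hψd : ∀ s, HasDerivAt ψ
      (2 * Real.sqrt 2 * M * (Wc s / (1 - ω s) ^ 2)) s := by
    intro s
    have h1 : HasDerivAt (fun y => 1 - ω y) (-Wc s) s := (hasDerivAt_omega s).const_sub 1
    have h2 := h1.inv (one_sub_omega_pos s).ne'
    have h3 := h2.const_mul (2 * Real.sqrt 2 * M)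
    refine h3.congr_deriv ?_
    ring
  have hψd_cont : Continuous (fun s => 2 * Real.sqrt 2 * M * (Wc s / (1 - ω s) ^ 2)) := by
    apply Continuous.mul continuous_const
    apply Continuous.div Wc_cont ((continuous_const.sub omega_cont).pow 2)
    intro s
    have := one_sub_omega_pos s
    exact pow_ne_zero 2 this.ne'
  have habs : |hfun f x| ≤ ∫ s in (0:ℝ)..x, |(Wc s ^ 2)⁻¹ * Fint f s| :=
    intervalIntegral.abs_integral_le_integral_abs hx
  have hmono : (∫ s in (0:ℝ)..x, |(Wc s ^ 2)⁻¹ * Fint f s|)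
      ≤ ∫ s in (0:ℝ)..x, 2 * Real.sqrt 2 * M * (Wc s / (1 - ω s) ^ 2) := by
    apply intervalIntegral.integral_mono_on hx
      (hqc.abs.intervalIntegrable _ _) (hψd_cont.intervalIntegrable _ _)
    intro s hs
    have hs0 : 0 ≤ s := hs.1
    have ha0 : 0 ≤ ω s := omega_nonneg hs0
    have ha1 : ω s < 1 := omega_lt_one s
    have hw := Wc_pos s
    have hF := Fint_le_right hf hM h0 s
    rw [abs_mul, abs_of_nonneg (by positivity : (0:ℝ) ≤ (Wc s ^ 2)⁻¹)]
    have step1 : (Wc s ^ 2)⁻¹ * |Fint f s| ≤ (Wc s ^ 2)⁻¹ * (M * (1 - ω s)) :=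
      mul_le_mul_of_nonneg_left hF (by positivity)
    apply le_trans step1
    rw [inv_mul_le_iff₀ (by positivity), mul_comm (Wc s ^2)]
    -- M (1-a) ≤ (2√2 M Wc/(1-a)²) Wc²
    have key : Real.sqrt 2 * Wc s = (1 - ω s) * (1 + ω s) := sqrt2_wc s
 
    have h23 : Real.sqrt 2 ^ 3 = 2 * Real.sqrt 2 := by
      rw [pow_succ, Real.sq_sqrt (by norm_num : (0:ℝ) ≤ 2)]
    have hcube : 2 * Real.sqrt 2 * Wc s ^ 3 = (1 - ω s) ^ 3 * (1 + ω s) ^ 3 := by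
      have hthis := congrArg (fun t => t ^ 3) key
      simp only [mul_pow] at hthis
      rw [← h23]
      exact hthis
    have hone : (1:ℝ) ≤ (1 + ω s) ^ 3 := one_le_pow₀ (by linarith)
    have target : M * (1 - ω s) ^ 3 ≤ 2 * Real.sqrt 2 * M * Wc s ^ 3 := by
      have h5 : M * (1 - ω s) ^ 3 * 1 ≤ M * (1 - ω s) ^ 3 * (1 + ω s) ^ 3 := by
        apply mul_le_mul_of_nonneg_left hone (mul_nonneg hM0 (pow_nonneg (by linarith) 3))
      calc M * (1 - ω s) ^ 3 = M * (1 - ω s) ^ 3 * 1 := by ring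
        _ ≤ M * (1 - ω s) ^ 3 * (1 + ω s) ^ 3 := h5
        _ = M * (2 * Real.sqrt 2 * Wc s ^ 3) := by rw [hcube]; ring
        _ = 2 * Real.sqrt 2 * M * Wc s ^ 3 := by ring
    have hre : 2 * Real.sqrt 2 * M * (Wc s / (1 - ω s) ^ 2) * Wc s ^ 2
        = 2 * Real.sqrt 2 * M * Wc s ^ 3 / (1 - ω s) ^ 2 := by
      field_simp
    rw [hre, le_div_iff₀ (pow_pos (by linarith : (0:ℝ) < 1 - ω s) 2)]
    calc M * (1 - ω s) * (1 - ω s) ^ 2 = M * (1 - ω s) ^ 3 := by ring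
      _ ≤ 2 * Real.sqrt 2 * M * Wc s ^ 3 := target
  have hFTC : (∫ s in (0:ℝ)..x, 2 * Real.sqrt 2 * M * (Wc s / (1 - ω s) ^ 2))
      = ψ x - ψ 0 := by
    apply intervalIntegral.integral_eq_sub_of_hasDerivAt
      (fun s _ => hψd s) (hψd_cont.intervalIntegrable _ _)
  have hψ0 : ψ 0 = 2 * Real.sqrt 2 * M := by
    rw [hψ]; simp [omega_zero]
  have hfinal : ψ x - ψ 0 ≤ 2 * Real.sqrt 2 * M / (1 - ω x) := by
    rw [hψ0, hψ]
    simp only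
    rw [← div_eq_mul_inv]
    have : (0:ℝ) ≤ 2 * Real.sqrt 2 * M := by positivity
    linarith
  calc |hfun f x| ≤ _ := habs
    _ ≤ _ := hmono
    _ = ψ x - ψ 0 := hFTC
    _ ≤ _ := hfinal

lemma hfun_bound_neg (hf : Continuous f) (hM : ∀ x, |f x| ≤ M)
    {x : ℝ} (hx : x ≤ 0) :
    |hfun f x| ≤ 2 * Real.sqrt 2 * M / (1 + ω x) := by
  have hM0 := M_nonneg hM
  have hqc := q_cont hf hM
  set φ : ℝ → ℝ := fun s => -(2 * Real.sqrt 2 * M) * (1 + ω s)⁻¹ with hφ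
  have hφd : ∀ s, HasDerivAt φ
      (2 * Real.sqrt 2 * M * (Wc s / (1 + ω s) ^ 2)) s := by
    intro s
    have h1 : HasDerivAt (fun y => 1 + ω y) (Wc s) s := (hasDerivAt_omega s).const_add 1
    have h2 := h1.inv (one_add_omega_pos s).ne'
    have h3 := h2.const_mul (-(2 * Real.sqrt 2 * M))
    refine h3.congr_deriv ?_
    ring
  have hφd_cont : Continuous (fun s => 2 * Real.sqrt 2 * M * (Wc s / (1 + ω s) ^ 2)) := by
    apply Continuous.mul continuous_const
    apply Continuous.div Wc_cont ((continuous_const.add omega_cont).pow 2)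
    intro s
    have := one_add_omega_pos s
    exact pow_ne_zero 2 this.ne'
  have heq : hfun f x = -(∫ s in x..(0:ℝ), (Wc s ^ 2)⁻¹ * Fint f s) := by
    rw [hfun, intervalIntegral.integral_symm]
  have habs : |hfun f x| ≤ ∫ s in x..(0:ℝ), |(Wc s ^ 2)⁻¹ * Fint f s| := by
    rw [heq, abs_neg]
    exact intervalIntegral.abs_integral_le_integral_abs hx
  have hmono : (∫ s in x..(0:ℝ), |(Wc s ^ 2)⁻¹ * Fint f s|)
      ≤ ∫ s in x..(0:ℝ), 2 * Real.sqrt 2 * M * (Wc s / (1 + ω s) ^ 2) := by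
    apply intervalIntegral.integral_mono_on hx
      (hqc.abs.intervalIntegrable _ _) (hφd_cont.intervalIntegrable _ _)
    intro s hs
    have hs0 : s ≤ 0 := hs.2
    have ha0 : ω s ≤ 0 := omega_nonpos hs0
    have ha1 : -1 < ω s := neg_one_lt_omega s
    have hw := Wc_pos s
    have hF := Fint_le_left hf hM s
    rw [abs_mul, abs_of_nonneg (by positivity : (0:ℝ) ≤ (Wc s ^ 2)⁻¹)]
    have step1 : (Wc s ^ 2)⁻¹ * |Fint f s| ≤ (Wc s ^ 2)⁻¹ * (M * (1 + ω s)) :=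
      mul_le_mul_of_nonneg_left hF (by positivity)
    apply le_trans step1
    rw [inv_mul_le_iff₀ (by positivity), mul_comm (Wc s ^2)]
    have key : Real.sqrt 2 * Wc s = (1 - ω s) * (1 + ω s) := sqrt2_wc s
 
    have h23 : Real.sqrt 2 ^ 3 = 2 * Real.sqrt 2 := by
      rw [pow_succ, Real.sq_sqrt (by norm_num : (0:ℝ) ≤ 2)]
    have hcube : 2 * Real.sqrt 2 * Wc s ^ 3 = (1 - ω s) ^ 3 * (1 + ω s) ^ 3 := by
      have hthis := congrArg (fun t => t ^ 3) key
      simp only [mul_pow] at hthis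
      rw [← h23]
      exact hthis
    have hone : (1:ℝ) ≤ (1 - ω s) ^ 3 := one_le_pow₀ (by linarith)
    have target : M * (1 + ω s) ^ 3 ≤ 2 * Real.sqrt 2 * M * Wc s ^ 3 := by
      have h5 : M * (1 + ω s) ^ 3 * 1 ≤ M * (1 + ω s) ^ 3 * (1 - ω s) ^ 3 := by
        apply mul_le_mul_of_nonneg_left hone (mul_nonneg hM0 (pow_nonneg (by linarith) 3))
      calc M * (1 + ω s) ^ 3 = M * (1 + ω s) ^ 3 * 1 := by ring
        _ ≤ M * (1 + ω s) ^ 3 * (1 - ω s) ^ 3 := h5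
        _ = M * (2 * Real.sqrt 2 * Wc s ^ 3) := by rw [hcube]; ring
        _ = 2 * Real.sqrt 2 * M * Wc s ^ 3 := by ring
    have hre : 2 * Real.sqrt 2 * M * (Wc s / (1 + ω s) ^ 2) * Wc s ^ 2
        = 2 * Real.sqrt 2 * M * Wc s ^ 3 / (1 + ω s) ^ 2 := by
      field_simp
    rw [hre, le_div_iff₀ (pow_pos (by linarith : (0:ℝ) < 1 + ω s) 2)]
    calc M * (1 + ω s) * (1 + ω s) ^ 2 = M * (1 + ω s) ^ 3 := by ring
      _ ≤ 2 * Real.sqrt 2 * M * Wc s ^ 3 := target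
  have hFTC : (∫ s in x..(0:ℝ), 2 * Real.sqrt 2 * M * (Wc s / (1 + ω s) ^ 2))
      = φ 0 - φ x := by
    apply intervalIntegral.integral_eq_sub_of_hasDerivAt
      (fun s _ => hφd s) (hφd_cont.intervalIntegrable _ _)
  have hφ0 : φ 0 = -(2 * Real.sqrt 2 * M) := by
    rw [hφ]; simp [omega_zero]
  have hfinal : φ 0 - φ x ≤ 2 * Real.sqrt 2 * M / (1 + ω x) := by
    rw [hφ0, hφ]
    simp only
    rw [neg_mul, sub_neg_eq_add, ← div_eq_mul_inv]
    have : (0:ℝ) ≤ 2 * Real.sqrt 2 * M := by positivity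
    linarith
  calc |hfun f x| ≤ _ := habs
    _ ≤ _ := hmono
    _ = φ 0 - φ x := hFTC
    _ ≤ _ := hfinal

end Hfacts

section Final

variable {f : ℝ → ℝ} {M : ℝ}

lemma Wc3h_le (hf : Continuous f) (hM : ∀ x, |f x| ≤ M)
    (h0 : (∫ x : ℝ, f x * Wc x) = 0) (x : ℝ) :
    |Wc x ^ 3 * hfun f x| ≤ 4 * M * Wc x ^ 2 := by
  have hM0 := M_nonneg hM
  have hw := Wc_pos x
  rcases le_total 0 x with hx | hx
  · have hb := hfun_bound_pos hf hM h0 hx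
    have h1 := one_sub_omega_pos x
    have h2 : 1 + ω x ≤ 2 := by linarith [omega_lt_one x]
    have key : Real.sqrt 2 * Wc x = (1 - ω x) * (1 + ω x) := sqrt2_wc x
    rw [abs_mul, abs_of_nonneg (by positivity : (0:ℝ) ≤ Wc x ^ 3)]
    calc Wc x ^ 3 * |hfun f x| ≤ Wc x ^ 3 * (2 * Real.sqrt 2 * M / (1 - ω x)) :=
          mul_le_mul_of_nonneg_left hb (by positivity)
      _ ≤ 4 * M * Wc x ^ 2 := by
          rw [mul_div_assoc', div_le_iff₀ h1]
          -- Wc^3 * 2√2 M ≤ 4 M Wc² (1-ω):  √2 Wc = (1-ω)(1+ω) ≤ 2(1-ω)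
          have hkey2 : Real.sqrt 2 * Wc x ≤ 2 * (1 - ω x) := by
            rw [key]
            nlinarith
          nlinarith [sq_nonneg (Wc x), s2_sq, mul_nonneg (mul_nonneg hM0 hw.le) hw.le,
            mul_le_mul_of_nonneg_left hkey2
              (by positivity : (0:ℝ) ≤ 2 * M * Wc x ^ 2)]
  · have hb := hfun_bound_neg hf hM hx
    have h1 := one_add_omega_pos x
    have h2 : 1 - ω x ≤ 2 := by linarith [neg_one_lt_omega x]
    have key : Real.sqrt 2 * Wc x = (1 - ω x) * (1 + ω x) := sqrt2_wc x
    rw [abs_mul, abs_of_nonneg (by positivity : (0:ℝ) ≤ Wc x ^ 3)]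
    calc Wc x ^ 3 * |hfun f x| ≤ Wc x ^ 3 * (2 * Real.sqrt 2 * M / (1 + ω x)) :=
          mul_le_mul_of_nonneg_left hb (by positivity)
      _ ≤ 4 * M * Wc x ^ 2 := by
          rw [mul_div_assoc', div_le_iff₀ h1]
          have hkey2 : Real.sqrt 2 * Wc x ≤ 2 * (1 + ω x) := by
            rw [key]
            nlinarith
          nlinarith [sq_nonneg (Wc x), s2_sq, mul_nonneg (mul_nonneg hM0 hw.le) hw.le,
            mul_le_mul_of_nonneg_left hkey2
              (by positivity : (0:ℝ) ≤ 2 * M * Wc x ^ 2)]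

lemma P_int (hf : Continuous f) (hM : ∀ x, |f x| ≤ M)
    (h0 : (∫ x : ℝ, f x * Wc x) = 0) :
    Integrable (fun x => ω x * Wc x ^ 3 * hfun f x) := by
  have hM0 := M_nonneg hM
  apply integrable_of_le_Wc (C := 4 * M * (Real.sqrt 2)⁻¹)
    ((omega_cont.mul (Wc_cont.pow 3)).mul (hfun_cont hf hM))
  intro x
  have hw := Wc_pos x
  have h1 : |ω x| ≤ 1 := by
    rw [abs_le]; exact ⟨(neg_one_lt_omega x).le, (omega_lt_one x).le⟩
  have h2 := Wc3h_le hf hM h0 x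
  have h3 := Wc_le x
  calc |ω x * Wc x ^ 3 * hfun f x| = |ω x| * |Wc x ^ 3 * hfun f x| := by
        rw [← abs_mul]; ring_nf
    _ ≤ 1 * (4 * M * Wc x ^ 2) := by
        apply mul_le_mul h1 h2 (abs_nonneg _) zero_le_one
    _ = 4 * M * (Wc x * Wc x) := by ring
    _ ≤ 4 * M * ((Real.sqrt 2)⁻¹ * Wc x) := by
        apply mul_le_mul_of_nonneg_left _ (by positivity)
        exact mul_le_mul_of_nonneg_right h3 hw.le
    _ = 4 * M * (Real.sqrt 2)⁻¹ * Wc x := by ring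

lemma WF_int (hf : Continuous f) (hM : ∀ x, |f x| ≤ M) :
    Integrable (fun x => Wc x * Fint f x) := by
  apply integrable_of_le_Wc (C := 2 * M) (Wc_cont.mul (Fint_cont hf hM))
  intro x
  have hw := Wc_pos x
  have hF := Fint_le_left hf hM x
  have h2 : 1 + ω x ≤ 2 := by linarith [omega_lt_one x]
  have hM0 := M_nonneg hM
  simp only [Pi.mul_apply]
  rw [abs_mul, abs_of_nonneg hw.le]
  calc Wc x * |Fint f x| ≤ Wc x * (M * (1 + ω x)) :=
        mul_le_mul_of_nonneg_left hF hw.le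
    _ ≤ Wc x * (M * 2) := by
        apply mul_le_mul_of_nonneg_left _ hw.le
        exact mul_le_mul_of_nonneg_left h2 hM0
    _ = 2 * M * Wc x := by ring

lemma hasDerivAt_G (hf : Continuous f) (hM : ∀ x, |f x| ≤ M) (x : ℝ) :
    HasDerivAt (fun y => -(Real.sqrt 2 / 6) * (Wc y ^ 3 * hfun f y))
      (ω x * Wc x ^ 3 * hfun f x - Real.sqrt 2 / 6 * (Wc x * Fint f x)) x := by
  have hw := Wc_pos x
  have hd1 : HasDerivAt (fun y => Wc y ^ 3) (3 * Wc x ^ 2 * (-(Real.sqrt 2) * ω x * Wc x)) x := by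
    have := (hasDerivAt_Wc x).pow 3
    norm_num at this
    refine this.congr_deriv ?_
    ring
  have hd2 := hasDerivAt_hfun hf hM x
  have hd3 := (hd1.mul hd2).const_mul (-(Real.sqrt 2 / 6))
  refine hd3.congr_deriv ?_
  have hinv : Wc x ^ 3 * ((Wc x ^ 2)⁻¹ * Fint f x) = Wc x * Fint f x := by
    field_simp
  rw [mul_add]
  rw [show -(Real.sqrt 2 / 6) * (Wc x ^ 3 * ((Wc x ^ 2)⁻¹ * Fint f x))
      = -(Real.sqrt 2 / 6) * (Wc x * Fint f x) by rw [hinv]]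
  have hmain : ω x * Wc x ^ 3 * hfun f x
      = -(Real.sqrt 2 / 6) * (3 * Wc x ^ 2 * (-(Real.sqrt 2) * ω x * Wc x) * hfun f x) := by
    have : -(Real.sqrt 2 / 6) * (3 * Wc x ^ 2 * (-(Real.sqrt 2) * ω x * Wc x) * hfun f x)
        = (Real.sqrt 2 * Real.sqrt 2) / 2 * (ω x * Wc x ^ 3 * hfun f x) := by ring
    rw [this, s2_sq]
    ring
  rw [← hmain]
  ring

lemma tendsto_G_atTop (hf : Continuous f) (hM : ∀ x, |f x| ≤ M)
    (h0 : (∫ x : ℝ, f x * Wc x) = 0) :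
    Filter.Tendsto (fun y => -(Real.sqrt 2 / 6) * (Wc y ^ 3 * hfun f y))
      Filter.atTop (nhds 0) := by
  apply squeeze_zero_norm (a := fun y => Real.sqrt 2 / 6 * (4 * M * Wc y ^ 2))
  · intro y
    rw [Real.norm_eq_abs, abs_mul, abs_neg, abs_of_nonneg (by positivity : (0:ℝ) ≤ Real.sqrt 2 / 6)]
    exact mul_le_mul_of_nonneg_left (Wc3h_le hf hM h0 y) (by positivity)
  · have := ((tendsto_Wc_atTop.mul tendsto_Wc_atTop).const_mul (Real.sqrt 2 / 6 * (4 * M)))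
    simpa [sq, mul_assoc] using this

lemma tendsto_G_atBot (hf : Continuous f) (hM : ∀ x, |f x| ≤ M)
    (h0 : (∫ x : ℝ, f x * Wc x) = 0) :
    Filter.Tendsto (fun y => -(Real.sqrt 2 / 6) * (Wc y ^ 3 * hfun f y))
      Filter.atBot (nhds 0) := by
  apply squeeze_zero_norm (a := fun y => Real.sqrt 2 / 6 * (4 * M * Wc y ^ 2))
  · intro y
    rw [Real.norm_eq_abs, abs_mul, abs_neg, abs_of_nonneg (by positivity : (0:ℝ) ≤ Real.sqrt 2 / 6)]
    exact mul_le_mul_of_nonneg_left (Wc3h_le hf hM h0 y) (by positivity)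
  · have := ((tendsto_Wc_atBot.mul tendsto_Wc_atBot).const_mul (Real.sqrt 2 / 6 * (4 * M)))
    simpa [sq, mul_assoc] using this

lemma step_A (hf : Continuous f) (hM : ∀ x, |f x| ≤ M)
    (h0 : (∫ x : ℝ, f x * Wc x) = 0) :
    (∫ x : ℝ, ω x * Wc x ^ 3 * hfun f x)
      = Real.sqrt 2 / 6 * ∫ x : ℝ, Wc x * Fint f x := by
  have hP := P_int hf hM h0
  have hWF := WF_int hf hM
  have hint : Integrable
      (fun x => ω x * Wc x ^ 3 * hfun f x - Real.sqrt 2 / 6 * (Wc x * Fint f x)) :=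
    hP.sub (hWF.const_mul _)
  have := integral_of_hasDerivAt_of_tendsto (hasDerivAt_G hf hM) hint
    (tendsto_G_atBot hf hM h0) (tendsto_G_atTop hf hM h0)
  rw [sub_zero] at this
  rw [integral_sub hP (hWF.const_mul _), MeasureTheory.integral_const_mul] at this
  linarith [this]

lemma step_B (hf : Continuous f) (hM : ∀ x, |f x| ≤ M)
    (h0 : (∫ x : ℝ, f x * Wc x) = 0) :
    (∫ x : ℝ, Wc x * Fint f x) = -∫ x : ℝ, f x * Wc x * ω x := by
  have hWF := WF_int hf hM
  have hgom : Integrable (fun x => f x * Wc x * ω x) := gom_int hf hM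
  have hgom' : Integrable (fun x => ω x * (f x * Wc x)) := by
    have : (fun x => ω x * (f x * Wc x)) = (fun x => f x * Wc x * ω x) := by
      funext x; ring
    rw [this]; exact hgom
  have hd : ∀ x, HasDerivAt (fun y => ω y * Fint f y)
      (Wc x * Fint f x + ω x * (f x * Wc x)) x := by
    intro x
    exact (hasDerivAt_omega x).mul (hasDerivAt_Fint hf hM x)
  have hint : Integrable (fun x => Wc x * Fint f x + ω x * (f x * Wc x)) :=
    hWF.add hgom'
  have htop : Filter.Tendsto (fun y => ω y * Fint f y) Filter.atTop (nhds 0) := by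
    apply squeeze_zero_norm (a := fun y => |Fint f y|)
    · intro y
      rw [Real.norm_eq_abs, abs_mul]
      have h1 : |ω y| ≤ 1 := by
        rw [abs_le]; exact ⟨(neg_one_lt_omega y).le, (omega_lt_one y).le⟩
      calc |ω y| * |Fint f y| ≤ 1 * |Fint f y| :=
            mul_le_mul_of_nonneg_right h1 (abs_nonneg _)
        _ = |Fint f y| := one_mul _
    · have := (tendsto_Fint_atTop hf hM h0).abs
      simpa using this
  have hbot : Filter.Tendsto (fun y => ω y * Fint f y) Filter.atBot (nhds 0) := by
    apply squeeze_zero_norm (a := fun y => |Fint f y|)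
    · intro y
      rw [Real.norm_eq_abs, abs_mul]
      have h1 : |ω y| ≤ 1 := by
        rw [abs_le]; exact ⟨(neg_one_lt_omega y).le, (omega_lt_one y).le⟩
      calc |ω y| * |Fint f y| ≤ 1 * |Fint f y| :=
            mul_le_mul_of_nonneg_right h1 (abs_nonneg _)
        _ = |Fint f y| := one_mul _
    · have := (tendsto_Fint_atBot hf hM).abs
      simpa using this
  have := integral_of_hasDerivAt_of_tendsto hd hint hbot htop
  rw [sub_zero] at this
  rw [integral_add hWF hgom'] at this
  have heq : (∫ x : ℝ, ω x * (f x * Wc x)) = ∫ x : ℝ, f x * Wc x * ω x := by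
    congr 1; funext x; ring
  linarith [this, heq]

end Final

/-- The key integration-by-parts identity for the projection of the error onto `ω'`:
if `f` is continuous, bounded, and orthogonal to `ω'`, then
`∫ ξ̃ ω (ω')² = −(√2/6) ∫ f ω' ω`, all integrals converging absolutely. -/
theorem xiTilde_projection_identity (f : ℝ → ℝ) (hf : Continuous f)
    (hfb : ∃ M : ℝ, ∀ x : ℝ, |f x| ≤ M)
    (horth : (∫ x : ℝ, f x * deriv ω x) = 0) :
    Integrable (fun x : ℝ => f x * deriv ω x) volume ∧
    Integrable (fun x : ℝ => f x * deriv ω x * ω x) volume ∧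
    Integrable (fun x : ℝ => xiTilde f x * ω x * (deriv ω x) ^ 2) volume ∧
    (∫ x : ℝ, xiTilde f x * ω x * (deriv ω x) ^ 2)
      = -(Real.sqrt 2 / 6) * ∫ x : ℝ, f x * deriv ω x * ω x := by
  obtain ⟨M, hM⟩ := hfb
  simp only [deriv_omega] at horth ⊢
  have h0 : (∫ x : ℝ, f x * Wc x) = 0 := horth
  have hxieq : (fun x : ℝ => xiTilde f x * ω x * Wc x ^ 2)
      = fun x => ω x * Wc x ^ 3 * hfun f x := by
    funext x
    simp only [xiTilde, deriv_omega, hfun, Fint]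
    ring
  refine ⟨g_int hf hM, gom_int hf hM, ?_, ?_⟩
  · rw [hxieq]
    exact P_int hf hM h0
  · rw [hxieq, step_A hf hM h0, step_B hf hM h0]
    ring
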